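/- Let ε > 0 with ε‖D‖₂ < 1, E invertible, (A,E) regular, and let λ ∉ spec(A,E) satisfy ‖G(λ)‖₂ > ε⁻¹ where G(λ) = C(λE - A)⁻¹B + D. Then there exists Δ ∈ ℂ^{m×p} with ‖Δ‖₂ < ε such that λ ∈ spec(M(Δ),E); in particular λ lies in σ_{ε'}(A,B,C,D,E) for some ε' < ε. -/

import Mathlib

open Matrix Filter Set

noncomputable def specNorm {p m : ℕ} (A : Matrix (Fin p) (Fin m) ℂ) : ℝ :=
  ‖(Matrix.toEuclideanLin A).toContinuousLinearMap‖

noncomputable def pertSys {n m p : ℕ} (A : Matrix (Fin n) (Fin n) ℂ) (B : Matrix (Fin n) (Fin m) ℂ)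
    (C : Matrix (Fin p) (Fin n) ℂ) (D : Matrix (Fin p) (Fin m) ℂ)
    (Δ : Matrix (Fin m) (Fin p) ℂ) : Matrix (Fin n) (Fin n) ℂ :=
  A + B * Δ * (1 - D * Δ)⁻¹ * C

noncomputable def svSet {n m p : ℕ} (ε : ℝ) (A : Matrix (Fin n) (Fin n) ℂ)
    (B : Matrix (Fin n) (Fin m) ℂ) (C : Matrix (Fin p) (Fin n) ℂ)
    (D : Matrix (Fin p) (Fin m) ℂ) (E : Matrix (Fin n) (Fin n) ℂ) : Set ℂ :=
  {z | ∃ Δ : Matrix (Fin m) (Fin p) ℂ, specNorm Δ ≤ ε ∧ (z • E - pertSys A B C D Δ).det = 0}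

noncomputable def transferFn {n m p : ℕ} (A : Matrix (Fin n) (Fin n) ℂ)
    (B : Matrix (Fin n) (Fin m) ℂ) (C : Matrix (Fin p) (Fin n) ℂ)
    (D : Matrix (Fin p) (Fin m) ℂ) (E : Matrix (Fin n) (Fin n) ℂ) (z : ℂ) :
    Matrix (Fin p) (Fin m) ℂ :=
  C * (z • E - A)⁻¹ * B + D

namespace StrictInteriorAux

/-- Matrices as continuous linear maps on Euclidean space. -/
noncomputable def L {a b : ℕ} (M : Matrix (Fin a) (Fin b) ℂ) :
    EuclideanSpace ℂ (Fin b) →L[ℂ] EuclideanSpace ℂ (Fin a) :=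
  (Matrix.toEuclideanLin M).toContinuousLinearMap

lemma specNorm_eq {a b : ℕ} (M : Matrix (Fin a) (Fin b) ℂ) : specNorm M = ‖L M‖ := rfl

lemma matL_app {a b : ℕ} (M : Matrix (Fin a) (Fin b) ℂ) (x : EuclideanSpace ℂ (Fin b)) :
    L M x = (WithLp.equiv 2 (Fin a → ℂ)).symm (M *ᵥ (WithLp.equiv 2 (Fin b → ℂ)) x) := rfl

lemma matL_mul {a b c : ℕ} (M : Matrix (Fin a) (Fin b) ℂ) (N : Matrix (Fin b) (Fin c) ℂ) :
    L (M * N) = (L M).comp (L N) := by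
  ext x
  simp [matL_app, ContinuousLinearMap.comp_apply, Matrix.mulVec_mulVec]

lemma matL_add {a b : ℕ} (M N : Matrix (Fin a) (Fin b) ℂ) : L (M + N) = L M + L N := by
  unfold L; rw [map_add, map_add]

lemma matL_sub {a b : ℕ} (M N : Matrix (Fin a) (Fin b) ℂ) : L (M - N) = L M - L N := by
  unfold L; rw [map_sub, map_sub]

lemma matL_one {a : ℕ} : L (1 : Matrix (Fin a) (Fin a) ℂ) = ContinuousLinearMap.id ℂ _ := by
  ext x
  simp [matL_app, Matrix.one_mulVec]

lemma matmatLone1 {a : ℕ} : L (1 : Matrix (Fin a) (Fin a) ℂ) = 1 := by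
  rw [matL_one]; rfl

lemma vecMulVec_mulVec {a b : ℕ} (w : Fin a → ℂ) (x y : Fin b → ℂ) :
    Matrix.vecMulVec w x *ᵥ y = (x ⬝ᵥ y) • w := by
  funext i
  simp only [Matrix.mulVec, dotProduct, Matrix.vecMulVec_apply, Pi.smul_apply,
    smul_eq_mul, Finset.sum_mul]
  exact Finset.sum_congr rfl fun j _ => by ring

lemma exists_norm_attained {a b : ℕ}
    (T : EuclideanSpace ℂ (Fin a) →L[ℂ] EuclideanSpace ℂ (Fin b)) :
    ∃ v, ‖v‖ ≤ 1 ∧ ‖T v‖ = ‖T‖ := by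
  obtain ⟨v, hv, hmax⟩ := (isCompact_closedBall (0 : EuclideanSpace ℂ (Fin a)) 1).exists_isMaxOn
    (Metric.nonempty_closedBall.mpr zero_le_one)
    ((continuous_norm.comp T.continuous).continuousOn)
  have hvball : ‖v‖ ≤ 1 := by simpa [Metric.mem_closedBall, dist_zero_right] using hv
  refine ⟨v, hvball, le_antisymm (T.unit_le_opNorm v hvball) ?_⟩
  refine T.opNorm_le_bound (norm_nonneg _) fun x => ?_
  rcases eq_or_ne x 0 with rfl | hx
  · simp
  · have hxpos : 0 < ‖x‖ := norm_pos_iff.mpr hx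
    have hmem : (‖x‖⁻¹ : ℝ) • x ∈ Metric.closedBall (0 : EuclideanSpace ℂ (Fin a)) 1 := by
      simp only [Metric.mem_closedBall, dist_zero_right, norm_smul, Real.norm_eq_abs,
        abs_of_pos (inv_pos.mpr hxpos)]
      rw [inv_mul_cancel₀ hxpos.ne']
    have h : ‖T ((‖x‖⁻¹ : ℝ) • x)‖ ≤ ‖T v‖ := hmax hmem
    rw [T.map_smul_of_tower, norm_smul, Real.norm_eq_abs,
      abs_of_pos (inv_pos.mpr hxpos)] at h
    calc ‖T x‖ = ‖x‖ * (‖x‖⁻¹ * ‖T x‖) := by field_simp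
    _ ≤ ‖x‖ * ‖T v‖ := mul_le_mul_of_nonneg_left h (norm_nonneg _)
    _ = ‖T v‖ * ‖x‖ := mul_comm _ _

end StrictInteriorAux

open StrictInteriorAux in
set_option maxHeartbeats 1000000 in
theorem strict_interior_perturbation {n m p : ℕ} (A : Matrix (Fin n) (Fin n) ℂ)
    (B : Matrix (Fin n) (Fin m) ℂ) (C : Matrix (Fin p) (Fin n) ℂ)
    (D : Matrix (Fin p) (Fin m) ℂ) (E : Matrix (Fin n) (Fin n) ℂ)
    (hE : IsUnit E) (hreg : ∃ w : ℂ, (w • E - A).det ≠ 0)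
    (ε : ℝ) (hε : 0 < ε) (hεD : ε * specNorm D < 1)
    (z : ℂ) (hz : (z • E - A).det ≠ 0)
    (hG : ε⁻¹ < specNorm (transferFn A B C D E z)) :
    (∃ Δ : Matrix (Fin m) (Fin p) ℂ, specNorm Δ < ε ∧
      (z • E - pertSys A B C D Δ).det = 0) ∧
    ∃ ε' : ℝ, 0 ≤ ε' ∧ ε' < ε ∧ z ∈ svSet ε' A B C D E := by
  classical
  set R : Matrix (Fin n) (Fin n) ℂ := (z • E - A)⁻¹ with hRdef
  have hRr : (z • E - A) * R = 1 := Matrix.mul_nonsing_inv _ (isUnit_iff_ne_zero.mpr hz)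
  set G : Matrix (Fin p) (Fin m) ℂ := transferFn A B C D E z with hGdef
  have hGmat : G = C * R * B + D := rfl
  set σ : ℝ := specNorm G with hσdef
  have hεinv : 0 < ε⁻¹ := inv_pos.mpr hε
  have hσ0 : 0 < σ := lt_trans hεinv hG
  have hσinv : σ⁻¹ < ε := inv_lt_of_inv_lt₀ hε hG
  -- norm attained
  obtain ⟨v, hv1, hvmax⟩ := exists_norm_attained (L G)
  have hLGv : ‖L G v‖ = σ := hvmax
  set σc : ℂ := (σ : ℂ) with hσcdef
  have hσc : σc ≠ 0 := by
    simpa [hσcdef] using Complex.ofReal_ne_zero.mpr hσ0.ne'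
  have hσcn : ‖σc‖ = σ := by
    rw [hσcdef, Complex.norm_real, Real.norm_eq_abs, abs_of_pos hσ0]
  set u : EuclideanSpace ℂ (Fin p) := σc⁻¹ • (L G v) with hudef
  have hunorm : ‖u‖ = 1 := by
    rw [hudef, norm_smul, norm_inv, hσcn, hLGv, inv_mul_cancel₀ hσ0.ne']
  have hGv : L G v = σc • u := by
    rw [hudef, smul_smul, mul_inv_cancel₀ hσc, one_smul]
  -- the perturbation
  set Δ : Matrix (Fin m) (Fin p) ℂ :=
    σc⁻¹ • Matrix.vecMulVec ((WithLp.equiv 2 (Fin m → ℂ)) v)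
      (star ((WithLp.equiv 2 (Fin p → ℂ)) u)) with hΔdef
  have hΔapp : ∀ y : EuclideanSpace ℂ (Fin p),
      L Δ y = (σc⁻¹ * (inner ℂ u y : ℂ)) • v := by
    intro y
    rw [matL_app, hΔdef, Matrix.smul_mulVec, vecMulVec_mulVec, dotProduct_comm,
      EuclideanSpace.inner_eq_star_dotProduct, smul_smul]
    rfl
  have hΔu : L Δ (σc • u) = v := by
    rw [hΔapp, inner_smul_right]
    rw [inner_self_eq_norm_sq_to_K (𝕜 := ℂ), hunorm]
    push_cast
    rw [one_pow, mul_one, inv_mul_cancel₀ hσc, one_smul]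
  have hΔnorm : specNorm Δ ≤ σ⁻¹ := by
    rw [specNorm_eq]
    refine ContinuousLinearMap.opNorm_le_bound _ (by positivity) fun y => ?_
    rw [hΔapp, norm_smul, norm_mul, norm_inv, hσcn]
    calc σ⁻¹ * ‖(inner ℂ u y : ℂ)‖ * ‖v‖ ≤ σ⁻¹ * (‖u‖ * ‖y‖) * 1 := by
          gcongr
          exact norm_inner_le_norm u y
    _ = σ⁻¹ * ‖y‖ := by rw [hunorm]; ring
  have hΔε : specNorm Δ < ε := lt_of_le_of_lt hΔnorm hσinv
  -- invertibility of K = 1 - D * Δ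
  set K : Matrix (Fin p) (Fin p) ℂ := 1 - D * Δ with hKdef
  have hDΔ : ‖L (D * Δ)‖ < 1 := by
    rw [matL_mul]
    calc ‖(L D).comp (L Δ)‖ ≤ ‖L D‖ * ‖L Δ‖ := ContinuousLinearMap.opNorm_comp_le _ _
    _ ≤ ‖L D‖ * ε := mul_le_mul_of_nonneg_left
        (le_of_lt (lt_of_le_of_lt ((specNorm_eq Δ) ▸ hΔnorm) hσinv)) (norm_nonneg _)
    _ = ε * specNorm D := by rw [specNorm_eq, mul_comm]
    _ < 1 := hεD
  have hKunit : IsUnit K := by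
    have h1 := (Units.oneSub (L (D * Δ)) hDΔ).isUnit
    rw [Units.val_oneSub, ← matmatLone1 (a := p), ← matL_sub, ← hKdef] at h1
    have h2 : IsUnit (Matrix.toEuclideanCLM (𝕜 := ℂ) (n := Fin p) K) := h1
    have h3 := h2.map (Matrix.toEuclideanCLM (𝕜 := ℂ) (n := Fin p)).symm
    rwa [StarAlgEquiv.symm_apply_apply] at h3
  have hKdet : K.det ≠ 0 := ((Matrix.isUnit_iff_isUnit_det K).mp hKunit).ne_zero
  have hKinv : K⁻¹ * K = 1 := Matrix.nonsing_inv_mul K (isUnit_iff_ne_zero.mpr hKdet)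
  -- the singular vector
  set x : EuclideanSpace ℂ (Fin n) := L R (L B v) with hxdef
  have hRx : L (z • E - A) x = L B v := by
    rw [hxdef, ← ContinuousLinearMap.comp_apply, ← matL_mul, hRr, matL_one,
      ContinuousLinearMap.id_apply]
  have hLG : L G v = L C x + L D v := by
    rw [hGmat, matL_add, matL_mul, matL_mul, ContinuousLinearMap.add_apply,
      ContinuousLinearMap.comp_apply, ContinuousLinearMap.comp_apply, hxdef]
  have hx0 : x ≠ 0 := by
    intro h
    have hBv : L B v = 0 := by rw [← hRx, h, map_zero]
    have : L G v = L D v := by rw [hLG, h, map_zero, zero_add]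
    have hσle : σ ≤ specNorm D := by
      have h1 : ‖L D v‖ ≤ ‖L D‖ * ‖v‖ := (L D).le_opNorm v
      have h2 : ‖L D‖ * ‖v‖ ≤ ‖L D‖ * 1 := mul_le_mul_of_nonneg_left hv1 (norm_nonneg _)
      calc σ = ‖L G v‖ := hLGv.symm
      _ = ‖L D v‖ := by rw [this]
      _ ≤ ‖L D‖ * 1 := le_trans h1 h2
      _ = specNorm D := by rw [mul_one, specNorm_eq]
    have hDlt : specNorm D < ε⁻¹ := by
      have h1 : ε * specNorm D < ε * ε⁻¹ := by
        rw [mul_inv_cancel₀ hε.ne']; exact hεD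
      exact lt_of_mul_lt_mul_left h1 hε.le
    exact absurd (lt_of_le_of_lt hσle (lt_trans hDlt hG)) (lt_irrefl σ)
  have hCx : L C x = σc • u - L D v := by
    have h1 : L C x + L D v = σc • u := by rw [← hLG, hGv]
    exact eq_sub_of_add_eq h1
  have hKu : L K (σc • u) = L C x := by
    rw [hKdef, matL_sub, matL_one, matL_mul, ContinuousLinearMap.sub_apply,
      ContinuousLinearMap.id_apply, ContinuousLinearMap.comp_apply, hΔu, hCx]
  have hKinvCx : L K⁻¹ (L C x) = σc • u := by
    rw [← hKu, ← ContinuousLinearMap.comp_apply, ← matL_mul, hKinv, matL_one,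
      ContinuousLinearMap.id_apply]
  have hfinal : L (z • E - pertSys A B C D Δ) x = 0 := by
    have hps : z • E - pertSys A B C D Δ = (z • E - A) - B * Δ * K⁻¹ * C := by
      rw [hKdef]; unfold pertSys; abel
    rw [hps, matL_sub, ContinuousLinearMap.sub_apply, hRx, matL_mul, matL_mul, matL_mul,
      ContinuousLinearMap.comp_apply, ContinuousLinearMap.comp_apply,
      ContinuousLinearMap.comp_apply, hKinvCx, hΔu, sub_self]
  have hdet : (z • E - pertSys A B C D Δ).det = 0 := by
    rw [← Matrix.exists_mulVec_eq_zero_iff]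
    refine ⟨(WithLp.equiv 2 (Fin n → ℂ)) x, ?_, ?_⟩
    · intro h
      exact hx0 ((WithLp.equiv 2 (Fin n → ℂ)).injective (by simpa using h))
    · have := congrArg (WithLp.equiv 2 (Fin n → ℂ)) hfinal
      simpa [matL_app] using this
  refine ⟨⟨Δ, hΔε, hdet⟩, σ⁻¹, le_of_lt (inv_pos.mpr hσ0), hσinv, Δ, hΔnorm, hdet⟩
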